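/- Let G be a graph, O ⊆ V, and let λ assign label X to every vertex of V∖O. If the labelled open graph (G, ∅, O, λ) does not have a Pauli flow, then (G, I, O, λ) does not have a Pauli flow for any choice of input set I ⊆ V. Conversely, if (G, ∅, O, λ) has a Pauli flow, then there exists I ⊆ V with |I| = |O| such that (G, I, O, λ) has a Pauli flow. -/

import Mathlib

inductive MLabel | X | Y | Z | XY | XZ | YZ
deriving DecidableEq

open Finset

variable {V : Type} [Fintype V] [DecidableEq V]

/-- The odd neighbourhood of a set of vertices. -/
def Odds (G : SimpleGraph V) [DecidableRel G.Adj] (A : Finset V) : Finset V :=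
  Finset.univ.filter fun v => Odd (A ∩ G.neighborFinset v).card

/-- Pauli flow conditions (P1)-(P9) for a labelled open graph. -/
structure PauliFlow (G : SimpleGraph V) [DecidableRel G.Adj]
    (I O : Finset V) (lam : V → MLabel) (c : V → Finset V) (prec : V → V → Prop) : Prop where
  irrefl : ∀ u, ¬ prec u u
  trans : ∀ u v w, prec u v → prec v w → prec u w
  csub : ∀ u, u ∉ O → ∀ v ∈ c u, v ∉ I
  P1 : ∀ u, u ∉ O → ∀ v ∈ c u, v ∉ O → u ≠ v →
      lam v ≠ MLabel.X → lam v ≠ MLabel.Y → prec u v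
  P2 : ∀ u, u ∉ O → ∀ v ∈ Odds G (c u), v ∉ O → u ≠ v →
      lam v ≠ MLabel.Y → lam v ≠ MLabel.Z → prec u v
  P3 : ∀ u, u ∉ O → ∀ v, v ∉ O → ¬ prec u v → u ≠ v → lam v = MLabel.Y →
      (v ∈ c u ↔ v ∈ Odds G (c u))
  P4 : ∀ u, u ∉ O → lam u = MLabel.XY → u ∉ c u ∧ u ∈ Odds G (c u)
  P5 : ∀ u, u ∉ O → lam u = MLabel.XZ → u ∈ c u ∧ u ∈ Odds G (c u)
  P6 : ∀ u, u ∉ O → lam u = MLabel.YZ → u ∈ c u ∧ u ∉ Odds G (c u)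
  P7 : ∀ u, u ∉ O → lam u = MLabel.X → u ∈ Odds G (c u)
  P8 : ∀ u, u ∉ O → lam u = MLabel.Z → u ∈ c u
  P9 : ∀ u, u ∉ O → lam u = MLabel.Y → Xor' (u ∈ c u) (u ∈ Odds G (c u))

/-- Focussing conditions (F1)-(F3). -/
def Focussed (G : SimpleGraph V) [DecidableRel G.Adj]
    (O : Finset V) (lam : V → MLabel) (c : V → Finset V) : Prop :=
  ∀ v, v ∉ O →
    (∀ w, w ∉ O → w ≠ v → w ∈ c v →
      lam w = MLabel.XY ∨ lam w = MLabel.X ∨ lam w = MLabel.Y) ∧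
    (∀ w, w ∉ O → w ≠ v → w ∈ Odds G (c v) →
      lam w = MLabel.XZ ∨ lam w = MLabel.YZ ∨ lam w = MLabel.Y ∨ lam w = MLabel.Z) ∧
    (∀ w, w ∉ O → w ≠ v → lam w = MLabel.Y → (w ∈ c v ↔ w ∈ Odds G (c v)))

/-- The reduced adjacency matrix over F₂: rows indexed by non-outputs, columns by non-inputs. -/
def redAdj (G : SimpleGraph V) [DecidableRel G.Adj] (I O : Finset V) :
    Matrix {v : V // v ∉ O} {v : V // v ∉ I} (ZMod 2) :=
  Matrix.of fun v u => if G.Adj v.val u.val then 1 else 0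

private lemma cast_eq_one_iff_odd (n : ℕ) : ((n : ZMod 2) = 1) ↔ Odd n := by
  rw [Nat.odd_iff, ← ZMod.natCast_mod n 2]
  rcases Nat.mod_two_eq_zero_or_one n with h | h <;> simp [h]

private def colAux (G : SimpleGraph V) [DecidableRel G.Adj] (O : Finset V) (j : V) :
    {v : V // v ∉ O} → ZMod 2 :=
  fun w => if G.Adj w.val j then 1 else 0

private lemma mem_odds_iff (G : SimpleGraph V) [DecidableRel G.Adj] (O : Finset V)
    (A : Finset V) (w : {v : V // v ∉ O}) :
    w.val ∈ Odds G A ↔ (∑ j ∈ A, colAux G O j) w = 1 := by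
  have h1 : (∑ j ∈ A, colAux G O j) w = ((A ∩ G.neighborFinset w.val).card : ZMod 2) := by
    rw [Finset.sum_apply]
    simp only [colAux]
    rw [Finset.sum_boole]
    congr 2
    ext a
    simp [SimpleGraph.mem_neighborFinset]
  rw [h1, cast_eq_one_iff_odd]
  simp [Odds]

private lemma single_mem_span (G : SimpleGraph V) [DecidableRel G.Adj] (O I : Finset V)
    (c : V → Finset V) (prec : V → V → Prop)
    (pf : PauliFlow G I O (fun _ => MLabel.X) c prec) (u : {v : V // v ∉ O}) :
    Pi.single u (1 : ZMod 2) ∈ Submodule.span (ZMod 2) (Set.range (colAux G O)) := by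
  have hV : ∀ a : ZMod 2, a = 0 ∨ a = 1 := by decide
  have itr : IsTrans V (fun a b => prec b a) := ⟨fun a b c h1 h2 => pf.trans c b a h2 h1⟩
  have iir : IsIrrefl V (fun a b => prec b a) := ⟨fun a => pf.irrefl a⟩
  have wf := Finite.wellFounded_of_trans_of_irrefl (fun a b : V => prec b a)
  suffices h : ∀ u : V, ∀ hu : u ∉ O,
      Pi.single (⟨u, hu⟩ : {v : V // v ∉ O}) (1 : ZMod 2) ∈
        Submodule.span (ZMod 2) (Set.range (colAux G O)) by
    have := h u.val u.property
    simpa using this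
  intro u
  refine WellFounded.induction wf
    (C := fun u => ∀ hu : u ∉ O,
      Pi.single (⟨u, hu⟩ : {v : V // v ∉ O}) (1 : ZMod 2) ∈
        Submodule.span (ZMod 2) (Set.range (colAux G O))) u ?_
  intro u IH hu
  set y : {v : V // v ∉ O} → ZMod 2 := ∑ j ∈ c u, colAux G O j with hy
  have hymem : y ∈ Submodule.span (ZMod 2) (Set.range (colAux G O)) :=
    Submodule.sum_mem _ fun j _ => Submodule.subset_span ⟨j, rfl⟩
  have hyu : y ⟨u, hu⟩ = 1 := by
    have h7 := pf.P7 u hu rfl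
    exact (mem_odds_iff G O (c u) ⟨u, hu⟩).mp h7
  have hyprec : ∀ w : {v : V // v ∉ O}, w ≠ ⟨u, hu⟩ → y w = 1 → prec u w.val := by
    intro w hw h1
    have hodds := (mem_odds_iff G O (c u) w).mpr h1
    refine pf.P2 u hu w.val hodds w.property ?_ (by decide) (by decide)
    intro heq
    exact hw (Subtype.ext heq.symm)
  have hdecomp : Pi.single (⟨u, hu⟩ : {v : V // v ∉ O}) (1 : ZMod 2)
      = y - ∑ w ∈ Finset.univ.erase ⟨u, hu⟩, Pi.single w (y w) := by
    have h1 : ∑ w : {v : V // v ∉ O}, Pi.single w (y w) = y := Finset.univ_sum_single y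
    have h2 : ∑ w : {v : V // v ∉ O}, Pi.single w (y w)
        = Pi.single (⟨u, hu⟩ : {v : V // v ∉ O}) (y ⟨u, hu⟩)
          + ∑ w ∈ Finset.univ.erase ⟨u, hu⟩, Pi.single w (y w) :=
      (Finset.add_sum_erase _ _ (Finset.mem_univ _)).symm
    rw [h1, hyu] at h2
    exact eq_sub_of_add_eq h2.symm
  rw [hdecomp]
  refine Submodule.sub_mem _ hymem (Submodule.sum_mem _ ?_)
  intro w hw
  rcases hV (y w) with h0 | h1
  · rw [h0, Pi.single_zero]; exact Submodule.zero_mem _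
  · rw [h1]
    have hprec := hyprec w (Finset.ne_of_mem_erase hw) h1
    have := IH w.val hprec w.property
    simpa using this
private lemma noflow_aux (G : SimpleGraph V) [DecidableRel G.Adj] (O : Finset V)
    (c : V → Finset V) (prec : V → V → Prop)
    (pf : PauliFlow G ∅ O (fun _ => MLabel.X) c prec) :
    ∃ I : Finset V, I.card = O.card ∧
      ∃ (c : V → Finset V) (prec : V → V → Prop),
        PauliFlow G I O (fun _ => MLabel.X) c prec := by
  classical
  have hV : ∀ a : ZMod 2, a = 0 ∨ a = 1 := by decide
  have hspan : Submodule.span (ZMod 2) (Set.range (colAux G O)) = ⊤ := by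
    rw [eq_top_iff]
    intro z _
    have hz : z = ∑ w : {v : V // v ∉ O}, (z w) • Pi.single w (1 : ZMod 2) := by
      conv_lhs => rw [← Finset.univ_sum_single z]
      refine Finset.sum_congr rfl fun w _ => ?_
      rw [← Pi.single_smul, smul_eq_mul, mul_one]
    rw [hz]
    exact Submodule.sum_mem _ fun w _ =>
      Submodule.smul_mem _ _ (single_mem_span G O ∅ c prec pf w)
  obtain ⟨b, hbsub, hbspan, hbind⟩ := exists_linearIndependent (ZMod 2) (Set.range (colAux G O))
  rw [hspan] at hbspan
  haveI : Fintype b := (Set.toFinite b).fintype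
  let B : Module.Basis b (ZMod 2) ({v : V // v ∉ O} → ZMod 2) :=
    Module.Basis.mk hbind (by rw [Subtype.range_coe, hbspan])
  have hcardb : Fintype.card b = Fintype.card {v : V // v ∉ O} := by
    rw [← Module.finrank_eq_card_basis B,
      Module.finrank_eq_card_basis (Pi.basisFun (ZMod 2) {v : V // v ∉ O})]
  have hgex : ∀ x : b, ∃ j : V, colAux G O j = (x : _) := fun x => hbsub x.2
  choose g hgspec using hgex
  have ginj : Function.Injective g := fun x y hxy =>
    Subtype.ext (by rw [← hgspec x, ← hgspec y, hxy])
  set S : Finset V := Finset.univ.image g with hS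
  have hScard : S.card = Fintype.card {v : V // v ∉ O} := by
    rw [hS, Finset.card_image_of_injective _ ginj, Finset.card_univ, hcardb]
  have hsolve : ∀ (u : V), u ∉ O → ∃ A : Finset V, A ⊆ S ∧
      ∀ hu : u ∉ O, ∑ j ∈ A, colAux G O j = Pi.single (⟨u, hu⟩ : {v : V // v ∉ O}) (1 : ZMod 2) := by
    intro u hu
    set e : {v : V // v ∉ O} → ZMod 2 := Pi.single (⟨u, hu⟩ : {v : V // v ∉ O}) (1 : ZMod 2) with he
    refine ⟨(Finset.univ.filter (fun x : b => B.repr e x = 1)).image g, ?_, ?_⟩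
    · intro j hj
      obtain ⟨x, _, rfl⟩ := Finset.mem_image.mp hj
      exact Finset.mem_image.mpr ⟨x, Finset.mem_univ x, rfl⟩
    · intro hu'
      rw [Finset.sum_image (fun x _ y _ h => ginj h)]
      have step1 : ∑ x ∈ Finset.univ.filter (fun x : b => B.repr e x = 1), colAux G O (g x)
          = ∑ x : b, (B.repr e x) • (x : {v : V // v ∉ O} → ZMod 2) := by
        rw [Finset.sum_filter]
        refine Finset.sum_congr rfl fun x _ => ?_
        rcases hV (B.repr e x) with h0 | h1
        · simp [h0]
        · simp [h1, hgspec x]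
      rw [step1]
      have step2 : ∑ x : b, (B.repr e x) • (x : {v : V // v ∉ O} → ZMod 2) = e := by
        have hs := B.sum_repr e
        simpa only [B, Module.Basis.coe_mk] using hs
      rw [step2]
  choose A hAsub hAeq using hsolve
  refine ⟨Sᶜ, ?_, fun u => if h : u ∉ O then A u h else ∅, fun _ _ => False, ?_⟩
  · rw [Finset.card_compl, hScard, Fintype.card_subtype_compl]
    have h1 : Fintype.card {v : V // v ∈ O} = O.card := Fintype.card_coe O
    have h2 : O.card ≤ Fintype.card V := Finset.card_le_univ O
    omega
  · have hodds : ∀ (u : V) (hu : u ∉ O) (w : V) (hw : w ∉ O),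
        (w ∈ Odds G (A u hu) ↔ (⟨w, hw⟩ : {v : V // v ∉ O}) = ⟨u, hu⟩) := by
      intro u hu w hw
      have h0 := mem_odds_iff G O (A u hu) ⟨w, hw⟩
      rw [hAeq u hu hu] at h0
      refine h0.trans ⟨fun h => ?_, fun h => ?_⟩
      · by_contra hne
        rw [Pi.single_eq_of_ne hne] at h
        exact zero_ne_one h
      · rw [h, Pi.single_eq_same]
    refine ⟨fun u h => h, fun _ _ _ h => h.elim, ?_, ?_, ?_, ?_, ?_, ?_, ?_, ?_, ?_, ?_⟩
    · intro u hu v hv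
      rw [dif_pos hu] at hv
      simpa using hAsub u hu hv
    · intro u hu v hv hvO hne hx _
      exact absurd rfl hx
    · intro u hu v hv hvO hne _ _
      rw [dif_pos hu] at hv
      exact absurd (congrArg Subtype.val ((hodds u hu v hvO).mp hv)).symm hne
    · intro u hu v hvO _ _ h; exact absurd h (by decide)
    · intro u hu h; exact absurd h (by decide)
    · intro u hu h; exact absurd h (by decide)
    · intro u hu h; exact absurd h (by decide)
    · intro u hu _
      show u ∈ Odds G _
      rw [dif_pos hu]
      exact (hodds u hu u hu).mpr rfl
    · intro u hu h; exact absurd h (by decide)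
    · intro u hu h; exact absurd h (by decide)


/-- final -/
theorem choose_inputs_all_X (G : SimpleGraph V) [DecidableRel G.Adj]
    (O : Finset V) :
    (¬ (∃ (c : V → Finset V) (prec : V → V → Prop),
          PauliFlow G ∅ O (fun _ => MLabel.X) c prec) →
      ∀ I : Finset V, ¬ (∃ (c : V → Finset V) (prec : V → V → Prop),
          PauliFlow G I O (fun _ => MLabel.X) c prec)) ∧
    ((∃ (c : V → Finset V) (prec : V → V → Prop),
          PauliFlow G ∅ O (fun _ => MLabel.X) c prec) →
      ∃ I : Finset V, I.card = O.card ∧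
        ∃ (c : V → Finset V) (prec : V → V → Prop),
          PauliFlow G I O (fun _ => MLabel.X) c prec) := by
  constructor
  · rintro hno I ⟨c, prec, pf⟩
    exact hno ⟨c, prec, { pf with csub := fun u _ v _ => Finset.notMem_empty v }⟩
  · rintro ⟨c, prec, pf⟩
    exact noflow_aux G O c prec pf
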